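/- Strong L² convergence of the piecewise constant BDF2 averages: Let X be a real Banach space, T > 0, and f ∈ L²(0,T;X). For an integer N ≥ 2 set τ = T/N, define f¹ = (1/τ)∫₀^τ f(t) dt and fⁿ = (3/(2τ))∫_{(n−1)τ}^{nτ} f(t) dt − (1/(2τ))∫_{(n−2)τ}^{(n−1)τ} f(t) dt for n = 2,…,N, and let f̄_τ(t) = fⁿ for t ∈ ((n−1)τ, nτ]. Then f̄_τ → f strongly in L²(0,T;X) as N → ∞, i.e. ∫₀^T ‖f̄_τ(t) − f(t)‖_X² dt → 0. -/

import Mathlib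

open Filter Topology MeasureTheory Set

noncomputable section

/-- The BDF2 averages of a function `f ∈ L²(0,T;X)`: `f¹ = (1/τ)∫₀^τ f`,
`fⁿ = (3/(2τ))∫_{(n−1)τ}^{nτ} f − (1/(2τ))∫_{(n−2)τ}^{(n−1)τ} f` for `n ≥ 2`,
where `τ = T/N` (Bochner integrals). -/
def rotheAvg {X : Type*} [NormedAddCommGroup X] [NormedSpace ℝ X] [CompleteSpace X]
    (T : ℝ) (N : ℕ) (f : ℝ → X) (n : ℕ) : X :=
  if n = 1 then (T / N)⁻¹ • ∫ t in Ioc (0 : ℝ) (T / N), f t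
  else (3 / (2 * (T / N))) • (∫ t in Ioc (((n : ℝ) - 1) * (T / N)) ((n : ℝ) * (T / N)), f t)
    - (1 / (2 * (T / N))) • (∫ t in Ioc (((n : ℝ) - 2) * (T / N)) (((n : ℝ) - 1) * (T / N)), f t)

/-- The piecewise constant interpolant `f̄_τ(t) = fⁿ` for `t ∈ ((n−1)τ, nτ]`, `τ = T/N`. -/
def rotheAvgInterp {X : Type*} [NormedAddCommGroup X] [NormedSpace ℝ X] [CompleteSpace X]
    (T : ℝ) (N : ℕ) (f : ℝ → X) (t : ℝ) : X :=
  rotheAvg T N f ⌈t / (T / N)⌉₊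

namespace RotheAux

variable {X : Type*} [NormedAddCommGroup X] [NormedSpace ℝ X] [CompleteSpace X]

lemma sq_integrable {μ : Measure ℝ} {x : ℝ → X} (hx : MemLp x 2 μ) :
    Integrable (fun t => ‖x t‖ ^ 2) μ := by
  have h := hx.integrable_norm_rpow two_ne_zero ENNReal.ofNat_ne_top
  simpa [ENNReal.toReal_ofNat, Real.rpow_natCast] using h

lemma memLp_sub {T a b : ℝ} (h0 : 0 ≤ a) (hbT : b ≤ T) {x : ℝ → X}
    (hx : MemLp x 2 (volume.restrict (Ioc 0 T))) :
    MemLp x 2 (volume.restrict (Ioc a b)) :=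
  hx.mono_measure (Measure.restrict_mono (Ioc_subset_Ioc h0 hbT) le_rfl)

/-- Cauchy–Schwarz for the Bochner integral over an interval. -/
lemma cs_aux {a b : ℝ} (hab : a ≤ b) {h : ℝ → X}
    (hh : MemLp h 2 (volume.restrict (Ioc a b))) :
    ‖∫ t in Ioc a b, h t‖ ^ 2 ≤ (b - a) * ∫ t in Ioc a b, ‖h t‖ ^ 2 := by
  set μ' := volume.restrict (Ioc a b) with hμ'
  have hμuniv : (μ' Set.univ).toReal = b - a := by
    rw [hμ', Measure.restrict_apply_univ, Real.volume_Ioc,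
      ENNReal.toReal_ofReal (by linarith)]
  have hI1 : Integrable (fun t => ‖h t‖) μ' := (hh.integrable one_le_two).norm
  have hI2 : Integrable (fun t => ‖h t‖ ^ 2) μ' := sq_integrable hh
  set I := ∫ t, ‖h t‖ ∂μ' with hIdef
  set S := ∫ t, ‖h t‖ ^ 2 ∂μ' with hSdef
  have hInn : 0 ≤ I := integral_nonneg fun t => norm_nonneg _
  have hSnn : 0 ≤ S := integral_nonneg fun t => sq_nonneg _
  have hnorm : ‖∫ t in Ioc a b, h t‖ ≤ I := norm_integral_le_integral_norm _
  have key : I ^ 2 ≤ (b - a) * S := by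
    rcases eq_or_lt_of_le hab with rfl | hlt
    · have hI0 : I = 0 := by
        rw [hIdef, hμ']
        simp
      simp [hI0]
    · set L := b - a with hL
      have hLpos : 0 < L := by simp only [hL]; linarith
      set c := I / L with hc
      have expand : ∫ t, (‖h t‖ - c) ^ 2 ∂μ' = S - 2 * c * I + c ^ 2 * L := by
        have h1 : Integrable (fun t => ‖h t‖ ^ 2 - 2 * c * ‖h t‖) μ' :=
          hI2.sub (hI1.const_mul _)
        have e1 := integral_add h1 (integrable_const (μ := μ') (c ^ 2 : ℝ))
        have e2 := integral_sub hI2 (hI1.const_mul (2 * c))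
        calc ∫ t, (‖h t‖ - c) ^ 2 ∂μ'
            = ∫ t, ((‖h t‖ ^ 2 - 2 * c * ‖h t‖) + c ^ 2) ∂μ' := by
              congr 1; ext t; ring
          _ = (∫ t, (‖h t‖ ^ 2 - 2 * c * ‖h t‖) ∂μ') + ∫ _, (c ^ 2 : ℝ) ∂μ' := e1
          _ = ((∫ t, ‖h t‖ ^ 2 ∂μ') - ∫ t, 2 * c * ‖h t‖ ∂μ') + (μ' univ).toReal • (c ^ 2 : ℝ) := by
              rw [e2, integral_const, measureReal_def]
          _ = S - 2 * c * I + c ^ 2 * L := by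
              rw [integral_const_mul, hμuniv, smul_eq_mul]; ring
      have hnonneg : 0 ≤ ∫ t, (‖h t‖ - c) ^ 2 ∂μ' := integral_nonneg fun t => sq_nonneg _
      rw [expand] at hnonneg
      have hcL : c * L = I := by rw [hc]; field_simp
      nlinarith [sq_nonneg (I - c * L)]
  calc ‖∫ t in Ioc a b, h t‖ ^ 2 ≤ I ^ 2 := by
        have := pow_le_pow_left₀ (norm_nonneg _) hnorm 2
        simpa using this
    _ ≤ (b - a) * S := key

lemma interp_sm (T : ℝ) (N : ℕ) (f : ℝ → X) :
    StronglyMeasurable (rotheAvgInterp T N f) := by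
  have h1 : rotheAvgInterp T N f = (rotheAvg T N f) ∘ fun t => ⌈t / (T / N)⌉₊ := rfl
  rw [h1]
  exact (continuous_of_discreteTopology (f := rotheAvg T N f)).stronglyMeasurable.comp_measurable
    ((measurable_id.div_const _).nat_ceil)

lemma interp_memLp (T : ℝ) (hT : 0 < T) (N : ℕ) (h : ℝ → X) :
    MemLp (rotheAvgInterp T N h) 2 (volume.restrict (Ioc 0 T)) := by
  apply MemLp.of_bound (interp_sm T N h).aestronglyMeasurable
    ((Finset.range (N + 1)).sup' (by simp) fun n => ‖rotheAvg T N h n‖)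
  filter_upwards [ae_restrict_mem measurableSet_Ioc] with t ht
  have hceil : ⌈t / (T / N)⌉₊ ≤ N := by
    rcases Nat.eq_zero_or_pos N with rfl | hN
    · simp
    · have hτ : 0 < T / N := div_pos hT (by exact_mod_cast hN)
      rw [Nat.ceil_le]
      rw [div_le_iff₀ hτ]
      calc t ≤ T := ht.2
        _ = (N : ℝ) * (T / N) := by field_simp
  exact Finset.le_sup' (f := fun n => ‖rotheAvg T N h n‖)
    (Finset.mem_range.2 (Nat.lt_succ_of_le hceil))

lemma ceil_eq {τ : ℝ} (hτ : 0 < τ) {n : ℕ} {t : ℝ}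
    (ht : t ∈ Ioc ((n : ℝ) * τ) (((n : ℝ) + 1) * τ)) :
    ⌈t / τ⌉₊ = n + 1 := by
  rw [Nat.ceil_eq_iff (Nat.succ_ne_zero n)]
  constructor
  · have : (n : ℝ) * τ < t := ht.1
    have : (n : ℝ) < t / τ := by rwa [lt_div_iff₀ hτ]
    simpa using this
  · have : t ≤ ((n : ℝ) + 1) * τ := ht.2
    have : t / τ ≤ (n : ℝ) + 1 := by rwa [div_le_iff₀ hτ]
    simpa using this

lemma sum_pieces {T : ℝ} (hT : 0 < T) {N : ℕ} (hN : 1 ≤ N) {F : ℝ → ℝ}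
    (hF : IntegrableOn F (Ioc 0 T) volume) :
    ∫ t in Ioc (0 : ℝ) T, F t
      = ∑ n ∈ Finset.range N, ∫ t in Ioc ((n : ℝ) * (T / N)) (((n : ℝ) + 1) * (T / N)), F t := by
  have hNpos : (0 : ℝ) < N := by exact_mod_cast hN
  have hτ : 0 < T / N := div_pos hT hNpos
  set a : ℕ → ℝ := fun i => (i : ℝ) * (T / N) with ha
  have hmono : ∀ i : ℕ, a i ≤ a (i + 1) := by
    intro i
    simp only [ha]
    push_cast
    nlinarith [le_of_lt hτ, (Nat.cast_nonneg i : (0:ℝ) ≤ i)]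
  have hsub : ∀ k : ℕ, k < N → Ioc (a k) (a (k + 1)) ⊆ Ioc 0 T := by
    intro k hk
    apply Ioc_subset_Ioc
    · simp only [ha]; positivity
    · have hk1 : ((k : ℝ) + 1) ≤ N := by exact_mod_cast hk
      have hNT : (N : ℝ) * (T / N) = T := by field_simp
      calc a (k + 1) = ((k : ℝ) + 1) * (T / N) := by simp [ha]
        _ ≤ (N : ℝ) * (T / N) := by nlinarith [le_of_lt hτ]
        _ = T := hNT
  have hint : ∀ k < N, IntervalIntegrable F volume (a k) (a (k + 1)) := by
    intro k hk
    rw [intervalIntegrable_iff_integrableOn_Ioc_of_le (hmono k)]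
    exact hF.mono_set (hsub k hk)
  have := intervalIntegral.sum_integral_adjacent_intervals (f := F) (μ := volume) hint
  have ha0 : a 0 = 0 := by simp [ha]
  have haN : a N = T := by
    simp only [ha]
    field_simp
  rw [ha0, haN] at this
  rw [← intervalIntegral.integral_of_le (le_of_lt hT), ← this]
  apply Finset.sum_congr rfl
  intro k hk
  rw [intervalIntegral.integral_of_le (hmono k)]
  simp [ha, add_mul]

lemma scalar_bound {τ w nu nv Bn Bn' : ℝ} (hτ : 0 < τ) (hw : 0 ≤ w) (hnu : 0 ≤ nu)
    (hnv : 0 ≤ nv) (hX : w ≤ (3 * nu + nv) / (2 * τ)) (h1 : nu ^ 2 ≤ τ * Bn)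
    (h2 : nv ^ 2 ≤ τ * Bn') :
    τ * w ^ 2 ≤ 9 / 2 * Bn + 1 / 2 * Bn' := by
  have hX3 : 2 * τ * w ≤ 3 * nu + nv := by
    have := (le_div_iff₀ (by positivity : (0:ℝ) < 2 * τ)).1 hX
    linarith
  have hsq : (2 * τ * w) ^ 2 ≤ (3 * nu + nv) ^ 2 :=
    pow_le_pow_left₀ (by positivity) hX3 2
  have h4 : (4 * τ) * (τ * w ^ 2) ≤ (4 * τ) * (9 / 2 * Bn + 1 / 2 * Bn') := by
    nlinarith [sq_nonneg (3 * nu - nv)]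
  exact le_of_mul_le_mul_left h4 (by positivity)

lemma avg_term_bound {T : ℝ} (hT : 0 < T) {N : ℕ} (hN1 : 1 ≤ N) {h : ℝ → X}
    (hh : MemLp h 2 (volume.restrict (Ioc 0 T))) {n : ℕ} (hn : n < N) :
    (T / N) * ‖rotheAvg T N h (n + 1)‖ ^ 2
      ≤ 9 / 2 * (∫ t in Ioc ((n : ℝ) * (T / N)) (((n : ℝ) + 1) * (T / N)), ‖h t‖ ^ 2)
        + 1 / 2 * (if n = 0 then (0 : ℝ)
            else ∫ t in Ioc (((n : ℝ) - 1) * (T / N)) ((n : ℝ) * (T / N)), ‖h t‖ ^ 2) := by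
  have hNpos : (0 : ℝ) < N := by exact_mod_cast hN1
  have hτ : 0 < T / N := div_pos hT hNpos
  have hNT : (N : ℝ) * (T / N) = T := by field_simp
  have hupper : ((n : ℝ) + 1) * (T / N) ≤ T := by
    have hk1 : ((n : ℝ) + 1) ≤ N := by exact_mod_cast hn
    nlinarith [le_of_lt hτ]
  set Bn := ∫ t in Ioc ((n : ℝ) * (T / N)) (((n : ℝ) + 1) * (T / N)), ‖h t‖ ^ 2 with hBn
  have hBnn : 0 ≤ Bn := integral_nonneg fun t => sq_nonneg _
  have hmemn : MemLp h 2 (volume.restrict (Ioc ((n : ℝ) * (T / N)) (((n : ℝ) + 1) * (T / N)))) :=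
    memLp_sub (by positivity) hupper hh
  have cs1 : ‖∫ t in Ioc ((n : ℝ) * (T / N)) (((n : ℝ) + 1) * (T / N)), h t‖ ^ 2
      ≤ (T / N) * Bn := by
    have := cs_aux (by nlinarith [le_of_lt hτ]) hmemn
    have heq : ((n : ℝ) + 1) * (T / N) - (n : ℝ) * (T / N) = T / N := by ring
    rwa [heq] at this
  rcases Nat.eq_zero_or_pos n with rfl | hn0
  · -- n = 0
    rw [if_pos rfl]
    have e : rotheAvg T N h 1 = (T / N)⁻¹ • ∫ t in Ioc (0 : ℝ) (T / N), h t := by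
      simp only [rotheAvg, if_pos]
    have hiv : Ioc ((0 : ℕ) * (T / N) : ℝ) ((((0 : ℕ) : ℝ) + 1) * (T / N)) = Ioc (0 : ℝ) (T / N) := by
      norm_num
    rw [e]
    have hn2 : ‖(T / N)⁻¹ • ∫ t in Ioc (0 : ℝ) (T / N), h t‖ ^ 2
        = ((T / N)⁻¹) ^ 2 * ‖∫ t in Ioc (0 : ℝ) (T / N), h t‖ ^ 2 := by
      rw [norm_smul, Real.norm_eq_abs, abs_of_pos (by positivity), mul_pow]
    rw [hn2]
    have cs1' : ‖∫ t in Ioc (0 : ℝ) (T / N), h t‖ ^ 2 ≤ (T / N) * Bn := by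
      rw [hiv] at cs1
      exact cs1
    calc (T / N) * ((T / N)⁻¹ ^ 2 * ‖∫ t in Ioc (0 : ℝ) (T / N), h t‖ ^ 2)
        ≤ (T / N) * ((T / N)⁻¹ ^ 2 * ((T / N) * Bn)) := by gcongr
      _ = Bn := by field_simp
      _ ≤ 9 / 2 * Bn + 1 / 2 * 0 := by linarith
  · -- n ≥ 1
    rw [if_neg (by omega : ¬ n = 0)]
    have hne : n + 1 ≠ 1 := by omega
    have c1 : ((n + 1 : ℕ) : ℝ) - 1 = (n : ℝ) := by push_cast; ring
    have c2 : ((n + 1 : ℕ) : ℝ) = (n : ℝ) + 1 := by push_cast; ring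
    have c3 : ((n + 1 : ℕ) : ℝ) - 2 = (n : ℝ) - 1 := by push_cast; ring
    have e : rotheAvg T N h (n + 1)
        = (3 / (2 * (T / N))) • (∫ t in Ioc ((n : ℝ) * (T / N)) (((n : ℝ) + 1) * (T / N)), h t)
          - (1 / (2 * (T / N))) • (∫ t in Ioc (((n : ℝ) - 1) * (T / N)) ((n : ℝ) * (T / N)), h t) := by
      simp only [rotheAvg, if_neg hne, c1, c2, c3]
      have e1 : ((n : ℝ) + 1 - 1) = (n : ℝ) := by ring
      have e2 : ((n : ℝ) + 1 - 2) = (n : ℝ) - 1 := by ring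
      rw [e1, e2]
    set Bn' := ∫ t in Ioc (((n : ℝ) - 1) * (T / N)) ((n : ℝ) * (T / N)), ‖h t‖ ^ 2 with hBn'
    have hn1R : (1 : ℝ) ≤ (n : ℝ) := by exact_mod_cast hn0
    have hmem' : MemLp h 2 (volume.restrict (Ioc (((n : ℝ) - 1) * (T / N)) ((n : ℝ) * (T / N)))) := by
      apply memLp_sub _ _ hh
      · nlinarith [le_of_lt hτ]
      · nlinarith [le_of_lt hτ, hupper]
    have cs2 : ‖∫ t in Ioc (((n : ℝ) - 1) * (T / N)) ((n : ℝ) * (T / N)), h t‖ ^ 2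
        ≤ (T / N) * Bn' := by
      have hab : ((n : ℝ) - 1) * (T / N) ≤ (n : ℝ) * (T / N) := by nlinarith [le_of_lt hτ]
      have := cs_aux hab hmem'
      have heq : (n : ℝ) * (T / N) - ((n : ℝ) - 1) * (T / N) = T / N := by ring
      rwa [heq] at this
    rw [e]
    set u := ∫ t in Ioc ((n : ℝ) * (T / N)) (((n : ℝ) + 1) * (T / N)), h t with hu
    set v := ∫ t in Ioc (((n : ℝ) - 1) * (T / N)) ((n : ℝ) * (T / N)), h t with hv
    have hX : ‖(3 / (2 * (T / N))) • u - (1 / (2 * (T / N))) • v‖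
        ≤ (3 * ‖u‖ + ‖v‖) / (2 * (T / N)) := by
      calc ‖(3 / (2 * (T / N))) • u - (1 / (2 * (T / N))) • v‖
          ≤ ‖(3 / (2 * (T / N))) • u‖ + ‖(1 / (2 * (T / N))) • v‖ := norm_sub_le _ _
        _ = (3 / (2 * (T / N))) * ‖u‖ + (1 / (2 * (T / N))) * ‖v‖ := by
            rw [norm_smul, norm_smul, Real.norm_eq_abs, Real.norm_eq_abs,
              abs_of_pos (by positivity), abs_of_pos (by positivity)]
        _ = (3 * ‖u‖ + ‖v‖) / (2 * (T / N)) := by ring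
    exact scalar_bound hτ (norm_nonneg _) (norm_nonneg _) (norm_nonneg _) hX cs1 cs2

lemma interp_bound {T : ℝ} (hT : 0 < T) {N : ℕ} (hN1 : 1 ≤ N) {h : ℝ → X}
    (hh : MemLp h 2 (volume.restrict (Ioc 0 T))) :
    ∫ t in Ioc (0 : ℝ) T, ‖rotheAvgInterp T N h t‖ ^ 2
      ≤ 5 * ∫ t in Ioc (0 : ℝ) T, ‖h t‖ ^ 2 := by
  have hNpos : (0 : ℝ) < N := by exact_mod_cast hN1
  have hτ : 0 < T / N := div_pos hT hNpos
  have hhsq : IntegrableOn (fun t => ‖h t‖ ^ 2) (Ioc 0 T) volume := sq_integrable hh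
  have hIsq : IntegrableOn (fun t => ‖rotheAvgInterp T N h t‖ ^ 2) (Ioc 0 T) volume :=
    sq_integrable (interp_memLp T hT N h)
  have hBsum := sum_pieces hT hN1 hhsq
  have hLHS := sum_pieces hT hN1 hIsq
  have hpiece : ∀ n : ℕ, n < N →
      (∫ t in Ioc ((n : ℝ) * (T / N)) (((n : ℝ) + 1) * (T / N)), ‖rotheAvgInterp T N h t‖ ^ 2)
        = (T / N) * ‖rotheAvg T N h (n + 1)‖ ^ 2 := by
    intro n hn
    have hcongr : EqOn (fun t => ‖rotheAvgInterp T N h t‖ ^ 2)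
        (fun _ => ‖rotheAvg T N h (n + 1)‖ ^ 2)
        (Ioc ((n : ℝ) * (T / N)) (((n : ℝ) + 1) * (T / N))) := by
      intro t ht
      simp only [rotheAvgInterp]
      rw [ceil_eq hτ ht]
    rw [setIntegral_congr_fun measurableSet_Ioc hcongr, setIntegral_const, measureReal_def, Real.volume_Ioc,
      smul_eq_mul, ENNReal.toReal_ofReal (by nlinarith [le_of_lt hτ])]
    congr 1
    ring
  set b : ℕ → ℝ := fun n => ∫ t in Ioc ((n : ℝ) * (T / N)) (((n : ℝ) + 1) * (T / N)), ‖h t‖ ^ 2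
    with hb
  have hbnn : ∀ n, 0 ≤ b n := fun n => integral_nonneg fun t => sq_nonneg _
  have hterm : ∀ n ∈ Finset.range N,
      (∫ t in Ioc ((n : ℝ) * (T / N)) (((n : ℝ) + 1) * (T / N)), ‖rotheAvgInterp T N h t‖ ^ 2)
        ≤ 9 / 2 * b n + 1 / 2 * (if n = 0 then (0 : ℝ)
            else ∫ t in Ioc (((n : ℝ) - 1) * (T / N)) ((n : ℝ) * (T / N)), ‖h t‖ ^ 2) := by
    intro n hn
    rw [hpiece n (Finset.mem_range.1 hn)]
    exact avg_term_bound hT hN1 hh (Finset.mem_range.1 hn)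
  have hf : ∀ n : ℕ, (if n = 0 then (0 : ℝ)
      else ∫ t in Ioc (((n : ℝ) - 1) * (T / N)) ((n : ℝ) * (T / N)), ‖h t‖ ^ 2)
      = if n = 0 then (0 : ℝ) else b (n - 1) := by
    intro n
    rcases Nat.eq_zero_or_pos n with rfl | hn0
    · simp
    · rw [if_neg (by omega), if_neg (by omega)]
      have h1n : (1 : ℕ) ≤ n := hn0
      have hc : ((n - 1 : ℕ) : ℝ) = (n : ℝ) - 1 := by
        push_cast [h1n]
        ring
      have hc2 : ((n : ℝ) - 1) + 1 = (n : ℝ) := by ring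
      simp only [hb, hc, hc2]
  have hshift : ∑ n ∈ Finset.range N, (if n = 0 then (0 : ℝ)
      else ∫ t in Ioc (((n : ℝ) - 1) * (T / N)) ((n : ℝ) * (T / N)), ‖h t‖ ^ 2)
      ≤ ∑ n ∈ Finset.range N, b n := by
    simp_rw [hf]
    obtain ⟨M, rfl⟩ : ∃ M, N = M + 1 := ⟨N - 1, by omega⟩
    rw [Finset.sum_range_succ']
    simp only [Nat.succ_ne_zero, if_neg, reduceIte, add_zero, Nat.add_sub_cancel]
    exact Finset.sum_le_sum_of_subset_of_nonneg
      (Finset.range_subset_range.2 (Nat.le_succ M)) (fun i _ _ => hbnn i)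
  calc ∫ t in Ioc (0 : ℝ) T, ‖rotheAvgInterp T N h t‖ ^ 2
      = ∑ n ∈ Finset.range N,
          ∫ t in Ioc ((n : ℝ) * (T / N)) (((n : ℝ) + 1) * (T / N)), ‖rotheAvgInterp T N h t‖ ^ 2 :=
        hLHS
    _ ≤ ∑ n ∈ Finset.range N, (9 / 2 * b n + 1 / 2 * (if n = 0 then (0 : ℝ)
          else ∫ t in Ioc (((n : ℝ) - 1) * (T / N)) ((n : ℝ) * (T / N)), ‖h t‖ ^ 2)) :=
        Finset.sum_le_sum hterm
    _ = 9 / 2 * (∑ n ∈ Finset.range N, b n)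
        + 1 / 2 * ∑ n ∈ Finset.range N, (if n = 0 then (0 : ℝ)
            else ∫ t in Ioc (((n : ℝ) - 1) * (T / N)) ((n : ℝ) * (T / N)), ‖h t‖ ^ 2) := by
        rw [Finset.sum_add_distrib, ← Finset.mul_sum, ← Finset.mul_sum]
    _ ≤ 9 / 2 * (∑ n ∈ Finset.range N, b n) + 1 / 2 * ∑ n ∈ Finset.range N, b n := by
        have := mul_le_mul_of_nonneg_left hshift (by norm_num : (0:ℝ) ≤ 1/2)
        linarith
    _ = 5 * ∑ n ∈ Finset.range N, b n := by ring
    _ = 5 * ∫ t in Ioc (0 : ℝ) T, ‖h t‖ ^ 2 := by rw [← hBsum]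


set_option maxHeartbeats 1000000 in
/-- Pointwise bound for the interpolant of a uniformly continuous function. -/
lemma interp_pointwise {T : ℝ} (hT : 0 < T) {N : ℕ} (hN1 : 1 ≤ N) {g : ℝ → X}
    (hg : Continuous g) {δ ε' : ℝ} (hε' : 0 < ε')
    (hδ : ∀ s t : ℝ, dist s t < δ → dist (g s) (g t) < ε')
    (hτδ : 2 * (T / N) < δ) {t : ℝ} (ht : t ∈ Ioc (0 : ℝ) T) :
    ‖rotheAvgInterp T N g t - g t‖ ≤ 2 * ε' := by
  have hNpos : (0 : ℝ) < N := by exact_mod_cast hN1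
  have hτ : 0 < T / N := div_pos hT hNpos
  set n := ⌈t / (T / N)⌉₊ with hn
  have htpos : 0 < t / (T / N) := div_pos ht.1 hτ
  have hn1 : 1 ≤ n := Nat.ceil_pos.2 htpos
  have hub : t ≤ (n : ℝ) * (T / N) := by
    have h0 := Nat.le_ceil (t / (T / N))
    rw [div_le_iff₀ hτ] at h0
    exact h0
  have hlb : ((n : ℝ) - 1) * (T / N) < t := by
    have h0 := Nat.ceil_lt_add_one (le_of_lt htpos)
    have h2 : ((n : ℝ) - 1) < t / (T / N) := by
      rw [hn]; linarith [h0]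
    rw [lt_div_iff₀ hτ] at h2
    linarith [h2]
  have hconst : ∀ a b : ℝ, b - a = T / N →
      (∫ _ in Ioc a b, g t) = (T / N) • g t := by
    intro a b hab
    rw [setIntegral_const, measureReal_def, Real.volume_Ioc, ENNReal.toReal_ofReal (by rw [hab]; positivity), hab]
  have hbound : ∀ a b : ℝ, b - a = T / N → (∀ s ∈ Ioc a b, dist s t < δ) →
      ‖(∫ s in Ioc a b, g s) - (T / N) • g t‖ ≤ ε' * (T / N) := by
    intro a b hab hdist
    have hfin : volume (Ioc a b) < ⊤ := by rw [Real.volume_Ioc]; exact ENNReal.ofReal_lt_top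
    have hsub : (∫ s in Ioc a b, g s) - (T / N) • g t = ∫ s in Ioc a b, (g s - g t) := by
      rw [integral_sub hg.integrableOn_Ioc (integrableOn_const hfin.ne), hconst a b hab]
    rw [hsub]
    have := norm_setIntegral_le_of_norm_le_const (μ := volume) (f := fun s => g s - g t)
      hfin (fun s hs => by
        rw [← dist_eq_norm]
        exact le_of_lt (hδ s t (hdist s hs)))
    rwa [measureReal_def, Real.volume_Ioc, ENNReal.toReal_ofReal (by rw [hab]; positivity), hab] at this
  have hinterp : rotheAvgInterp T N g t = rotheAvg T N g n := rfl
  rcases eq_or_lt_of_le hn1 with hn1' | hn2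
  · -- n = 1
    have hn1'' : n = 1 := hn1'.symm
    have havg : rotheAvg T N g n = (T / N)⁻¹ • ∫ s in Ioc (0 : ℝ) (T / N), g s := by
      rw [hn1'']; simp only [rotheAvg, if_pos]
    have hgt : g t = (T / N)⁻¹ • ((T / N) • g t) := by
      rw [smul_smul, inv_mul_cancel₀ (ne_of_gt hτ), one_smul]
    have hkey : rotheAvgInterp T N g t - g t
        = (T / N)⁻¹ • ((∫ s in Ioc (0 : ℝ) (T / N), g s) - (T / N) • g t) := by
      rw [hinterp, havg, smul_sub, ← hgt]
    rw [hkey, norm_smul, Real.norm_eq_abs, abs_of_pos (by positivity)]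
    have hd : ∀ s ∈ Ioc (0 : ℝ) (T / N), dist s t < δ := by
      intro s hs
      rw [Real.dist_eq]
      have ht1 : t ≤ T / N := by
        have := hub; rw [hn1''] at this; simpa using this
      have hs1 := hs.1; have hs2 := hs.2; have ht0 := ht.1
      rw [abs_lt]
      constructor <;> nlinarith [hτ]
    have := hbound 0 (T / N) (by ring) hd
    calc (T / N)⁻¹ * ‖(∫ s in Ioc (0 : ℝ) (T / N), g s) - (T / N) • g t‖
        ≤ (T / N)⁻¹ * (ε' * (T / N)) := by
          apply mul_le_mul_of_nonneg_left this (by positivity)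
      _ = ε' := by field_simp
      _ ≤ 2 * ε' := by linarith
  · -- n ≥ 2
    have hne : ¬ n = 1 := by omega
    have hn2R : (2 : ℝ) ≤ (n : ℝ) := by exact_mod_cast hn2
    have havg : rotheAvg T N g n
        = (3 / (2 * (T / N))) • (∫ s in Ioc (((n : ℝ) - 1) * (T / N)) ((n : ℝ) * (T / N)), g s)
          - (1 / (2 * (T / N))) • (∫ s in Ioc (((n : ℝ) - 2) * (T / N)) (((n : ℝ) - 1) * (T / N)), g s) := by
      simp only [rotheAvg, if_neg hne]
    have hgt : g t = (3 / (2 * (T / N))) • ((T / N) • g t)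
        - (1 / (2 * (T / N))) • ((T / N) • g t) := by
      rw [smul_smul, smul_smul, ← sub_smul]
      have : 3 / (2 * (T / N)) * (T / N) - 1 / (2 * (T / N)) * (T / N) = 1 := by
        field_simp
        ring
      rw [this, one_smul]
    have hkey : rotheAvgInterp T N g t - g t
        = (3 / (2 * (T / N))) • ((∫ s in Ioc (((n : ℝ) - 1) * (T / N)) ((n : ℝ) * (T / N)), g s) - (T / N) • g t)
          - (1 / (2 * (T / N))) • ((∫ s in Ioc (((n : ℝ) - 2) * (T / N)) (((n : ℝ) - 1) * (T / N)), g s) - (T / N) • g t) := by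
      rw [hinterp, havg, smul_sub, smul_sub]
      nth_rewrite 1 [hgt]
      abel
    have hd1 : ∀ s ∈ Ioc (((n : ℝ) - 1) * (T / N)) ((n : ℝ) * (T / N)), dist s t < δ := by
      intro s hs
      rw [Real.dist_eq, abs_lt]
      have hs1 := hs.1; have hs2 := hs.2
      constructor <;> nlinarith [hτ, hlb, hub]
    have hd2 : ∀ s ∈ Ioc (((n : ℝ) - 2) * (T / N)) (((n : ℝ) - 1) * (T / N)), dist s t < δ := by
      intro s hs
      rw [Real.dist_eq, abs_lt]
      have hs1 := hs.1; have hs2 := hs.2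
      constructor <;> nlinarith [hτ, hlb, hub]
    have hb1 := hbound _ _ (by ring) hd1
    have hb2 := hbound _ _ (by ring) hd2
    rw [hkey]
    calc ‖(3 / (2 * (T / N))) • ((∫ s in Ioc (((n : ℝ) - 1) * (T / N)) ((n : ℝ) * (T / N)), g s) - (T / N) • g t)
          - (1 / (2 * (T / N))) • ((∫ s in Ioc (((n : ℝ) - 2) * (T / N)) (((n : ℝ) - 1) * (T / N)), g s) - (T / N) • g t)‖
        ≤ ‖(3 / (2 * (T / N))) • ((∫ s in Ioc (((n : ℝ) - 1) * (T / N)) ((n : ℝ) * (T / N)), g s) - (T / N) • g t)‖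
          + ‖(1 / (2 * (T / N))) • ((∫ s in Ioc (((n : ℝ) - 2) * (T / N)) (((n : ℝ) - 1) * (T / N)), g s) - (T / N) • g t)‖ :=
          norm_sub_le _ _
      _ = (3 / (2 * (T / N))) * ‖(∫ s in Ioc (((n : ℝ) - 1) * (T / N)) ((n : ℝ) * (T / N)), g s) - (T / N) • g t‖
          + (1 / (2 * (T / N))) * ‖(∫ s in Ioc (((n : ℝ) - 2) * (T / N)) (((n : ℝ) - 1) * (T / N)), g s) - (T / N) • g t‖ := by
          rw [norm_smul, norm_smul, Real.norm_eq_abs, Real.norm_eq_abs,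
            abs_of_pos (by positivity), abs_of_pos (by positivity)]
      _ ≤ (3 / (2 * (T / N))) * (ε' * (T / N)) + (1 / (2 * (T / N))) * (ε' * (T / N)) := by
          gcongr
      _ = 2 * ε' := by field_simp; ring


lemma cont_small {T : ℝ} (hT : 0 < T) {g : ℝ → X} (hg : Continuous g)
    (hgc : HasCompactSupport g) {ε : ℝ} (hε : 0 < ε) :
    ∀ᶠ N : ℕ in atTop, ∫ t in Ioc (0 : ℝ) T, ‖rotheAvgInterp T N g t - g t‖ ^ 2 ≤ ε := by
  have huc : UniformContinuous g := hgc.uniformContinuous_of_continuous hg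
  set ε' := Real.sqrt (ε / (8 * T)) with hε'def
  have hε' : 0 < ε' := Real.sqrt_pos.2 (by positivity)
  obtain ⟨δ, hδpos, hδ⟩ := Metric.uniformContinuous_iff.1 huc ε' hε'
  have h2 : Tendsto (fun N : ℕ => 2 * (T / N)) atTop (𝓝 (2 * 0)) :=
    (tendsto_const_div_atTop_nhds_zero_nat T).const_mul 2
  rw [mul_zero] at h2
  filter_upwards [eventually_ge_atTop 1, h2.eventually_lt_const hδpos] with N hN1 hτδ
  have hpt : ∀ t ∈ Ioc (0 : ℝ) T, ‖rotheAvgInterp T N g t - g t‖ ^ 2 ≤ (2 * ε') ^ 2 := by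
    intro t ht
    have hb := interp_pointwise hT hN1 hg hε' (fun s t hst => hδ hst) hτδ ht
    exact pow_le_pow_left₀ (norm_nonneg _) hb 2
  have hfin : volume (Ioc (0 : ℝ) T) < ⊤ := by
    rw [Real.volume_Ioc]; exact ENNReal.ofReal_lt_top
  have hint : ∫ t in Ioc (0 : ℝ) T, ‖rotheAvgInterp T N g t - g t‖ ^ 2
      ≤ ∫ _ in Ioc (0 : ℝ) T, ((2 * ε') ^ 2 : ℝ) := by
    apply integral_mono_of_nonneg (Eventually.of_forall fun t => sq_nonneg _)
      (integrableOn_const (C := ((2 * ε') ^ 2 : ℝ)) hfin.ne)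
    filter_upwards [ae_restrict_mem measurableSet_Ioc] with t ht
    exact hpt t ht
  have hconst : ∫ _ in Ioc (0 : ℝ) T, ((2 * ε') ^ 2 : ℝ) = (2 * ε') ^ 2 * T := by
    rw [setIntegral_const, measureReal_def, Real.volume_Ioc, ENNReal.toReal_ofReal (by linarith),
      smul_eq_mul, sub_zero]
    ring
  have hval : (2 * ε') ^ 2 * T = ε / 2 := by
    have hTne : T ≠ 0 := ne_of_gt hT
    rw [mul_pow, hε'def, Real.sq_sqrt (by positivity)]
    field_simp
    ring
  rw [hconst, hval] at hint
  linarith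

lemma rotheAvg_sub {T : ℝ} (hT : 0 < T) {N : ℕ} (hN1 : 1 ≤ N) {f g : ℝ → X}
    (hfi : IntegrableOn f (Ioc 0 T) volume) (hgi : IntegrableOn g (Ioc 0 T) volume)
    {n : ℕ} (hn1 : 1 ≤ n) (hnN : n ≤ N) :
    rotheAvg T N (fun s => f s - g s) n = rotheAvg T N f n - rotheAvg T N g n := by
  have hNpos : (0 : ℝ) < N := by exact_mod_cast hN1
  have hτ : 0 < T / N := div_pos hT hNpos
  have hNT : (N : ℝ) * (T / N) = T := by field_simp
  have hnNR : (n : ℝ) ≤ N := by exact_mod_cast hnN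
  have hsubI : ∀ a b : ℝ, 0 ≤ a → b ≤ T →
      IntegrableOn f (Ioc a b) volume ∧ IntegrableOn g (Ioc a b) volume := fun a b ha hb =>
    ⟨hfi.mono_set (Ioc_subset_Ioc ha hb), hgi.mono_set (Ioc_subset_Ioc ha hb)⟩
  rcases eq_or_lt_of_le hn1 with h1 | h2
  · rw [← h1]
    simp only [rotheAvg, if_pos]
    have hN1R : (1 : ℝ) ≤ (N : ℝ) := by exact_mod_cast hN1
    have hτT : T / N ≤ T := by
      nlinarith [mul_nonneg (sub_nonneg.2 hN1R) (le_of_lt hτ), hNT]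
    obtain ⟨hfI, hgI⟩ := hsubI 0 (T / N) le_rfl hτT
    rw [integral_sub hfI hgI, smul_sub]
  · have hne : ¬ n = 1 := by omega
    simp only [rotheAvg, if_neg hne]
    have h2R : (2 : ℝ) ≤ (n : ℝ) := by exact_mod_cast h2
    obtain ⟨hfI1, hgI1⟩ := hsubI (((n : ℝ) - 1) * (T / N)) ((n : ℝ) * (T / N))
      (by nlinarith [le_of_lt hτ]) (by nlinarith [le_of_lt hτ])
    obtain ⟨hfI2, hgI2⟩ := hsubI (((n : ℝ) - 2) * (T / N)) (((n : ℝ) - 1) * (T / N))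
      (by nlinarith [le_of_lt hτ]) (by nlinarith [le_of_lt hτ])
    rw [integral_sub hfI1 hgI1, integral_sub hfI2 hgI2, smul_sub, smul_sub]
    abel

lemma sq_integral_le_of_eLpNorm_le {μ : Measure ℝ} {u : ℝ → X} (hu : MemLp u 2 μ)
    {c : ℝ} (hc : 0 ≤ c) (h : eLpNorm u 2 μ ≤ ENNReal.ofReal c) :
    ∫ t, ‖u t‖ ^ 2 ∂μ ≤ c ^ 2 := by
  rw [hu.eLpNorm_eq_integral_rpow_norm two_ne_zero ENNReal.ofNat_ne_top] at h
  set S := ∫ a, ‖u a‖ ^ (2 : ENNReal).toReal ∂μ with hS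
  have hSnn : 0 ≤ S := integral_nonneg fun t => Real.rpow_nonneg (norm_nonneg _) _
  have h2 : S ^ ((2 : ENNReal).toReal)⁻¹ ≤ c := (ENNReal.ofReal_le_ofReal_iff hc).1 h
  have hSval : S ^ ((2 : ENNReal).toReal)⁻¹ = Real.sqrt S := by
    rw [ENNReal.toReal_ofNat, Real.sqrt_eq_rpow]
    norm_num
  rw [hSval] at h2
  have hS2 : S ≤ c ^ 2 := by
    nlinarith [Real.sq_sqrt hSnn, Real.sqrt_nonneg S]
  calc ∫ t, ‖u t‖ ^ 2 ∂μ = S := by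
        rw [hS]
        congr 1
        ext t
        rw [ENNReal.toReal_ofNat, show ((2 : ℝ)) = ((2 : ℕ) : ℝ) by norm_num,
          Real.rpow_natCast]
    _ ≤ c ^ 2 := hS2

end RotheAux

open RotheAux in
/-- **Strong `L²` convergence of the piecewise constant BDF2 averages.** Let `X` be a real
Banach space, `T > 0` and `f ∈ L²(0,T;X)`. Then `f̄_τ → f` strongly in `L²(0,T;X)` as
`N → ∞`, i.e. `∫₀^T ‖f̄_τ(t) − f(t)‖² dt → 0`. -/
theorem rotheAvgInterp_tendsto_L2
    {X : Type*} [NormedAddCommGroup X] [NormedSpace ℝ X] [CompleteSpace X]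
    (T : ℝ) (hT : 0 < T) (f : ℝ → X)
    (hf : MemLp f 2 (volume.restrict (Ioc (0 : ℝ) T))) :
    Tendsto (fun N : ℕ => ∫ t in Ioc (0 : ℝ) T, ‖rotheAvgInterp T N f t - f t‖ ^ 2)
      atTop (𝓝 0) := by
  rw [NormedAddCommGroup.tendsto_nhds_zero]
  intro ε hε
  have hfin : volume (Ioc (0 : ℝ) T) < ⊤ := by
    rw [Real.volume_Ioc]; exact ENNReal.ofReal_lt_top
  set c := Real.sqrt (ε / 72) with hcdef
  have hcpos : 0 < c := Real.sqrt_pos.2 (by positivity)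
  have hf' : MemLp ((Ioc (0 : ℝ) T).indicator f) 2 volume :=
    (memLp_indicator_iff_restrict measurableSet_Ioc).2 hf
  obtain ⟨g, hgsupp, hgclose, hgcont, hgmem⟩ :=
    hf'.exists_hasCompactSupport_eLpNorm_sub_le ENNReal.ofNat_ne_top
      (ε := ENNReal.ofReal c) (by rw [Ne, ENNReal.ofReal_eq_zero]; push_neg; exact hcpos)
  have hgmem' : MemLp g 2 (volume.restrict (Ioc (0 : ℝ) T)) :=
    hgmem.mono_measure Measure.restrict_le_self
  have hfgmem : MemLp (fun s => f s - g s) 2 (volume.restrict (Ioc (0 : ℝ) T)) := hf.sub hgmem'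
  have hclose2 : eLpNorm (fun s => f s - g s) 2 (volume.restrict (Ioc (0 : ℝ) T))
      ≤ ENNReal.ofReal c := by
    have he1 : (fun s => f s - g s) =ᵐ[volume.restrict (Ioc (0 : ℝ) T)]
        ((Ioc (0 : ℝ) T).indicator f - g) := by
      filter_upwards [indicator_ae_eq_restrict (f := f) (μ := volume)
        (measurableSet_Ioc (a := (0:ℝ)) (b := T))] with t ht
      simp [Pi.sub_apply, ht]
    calc eLpNorm (fun s => f s - g s) 2 (volume.restrict (Ioc (0 : ℝ) T))
        = eLpNorm ((Ioc (0 : ℝ) T).indicator f - g) 2 (volume.restrict (Ioc (0 : ℝ) T)) :=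
          eLpNorm_congr_ae he1
      _ ≤ eLpNorm ((Ioc (0 : ℝ) T).indicator f - g) 2 volume :=
          eLpNorm_mono_measure _ Measure.restrict_le_self
      _ ≤ ENNReal.ofReal c := hgclose
  have hD : ∫ t in Ioc (0 : ℝ) T, ‖f t - g t‖ ^ 2 ≤ ε / 72 := by
    have := sq_integral_le_of_eLpNorm_le hfgmem (le_of_lt hcpos) hclose2
    rwa [hcdef, Real.sq_sqrt (by positivity)] at this
  have hfint : IntegrableOn f (Ioc 0 T) volume := hf.integrable one_le_two
  have hgint : IntegrableOn g (Ioc 0 T) volume := hgmem'.integrable one_le_two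
  filter_upwards [cont_small hT hgcont hgsupp (by positivity : 0 < ε / 12),
    eventually_ge_atTop 1] with N hNg hN1
  have hNpos : (0 : ℝ) < N := by exact_mod_cast hN1
  have hτ : 0 < T / N := div_pos hT hNpos
  have hlin : ∀ t ∈ Ioc (0 : ℝ) T, rotheAvgInterp T N f t - f t
      = rotheAvgInterp T N (fun s => f s - g s) t + (rotheAvgInterp T N g t - g t)
        + (g t - f t) := by
    intro t ht
    have hceil1 : 1 ≤ ⌈t / (T / N)⌉₊ := Nat.ceil_pos.2 (div_pos ht.1 hτ)
    have hceilN : ⌈t / (T / N)⌉₊ ≤ N := by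
      rw [Nat.ceil_le, div_le_iff₀ hτ]
      calc t ≤ T := ht.2
        _ = (N : ℝ) * (T / N) := by field_simp
    have hsub := rotheAvg_sub hT hN1 hfint hgint hceil1 hceilN
    simp only [rotheAvgInterp]
    rw [hsub]
    abel
  have hptsq : ∀ t ∈ Ioc (0 : ℝ) T, ‖rotheAvgInterp T N f t - f t‖ ^ 2
      ≤ 3 * ‖rotheAvgInterp T N (fun s => f s - g s) t‖ ^ 2
        + 3 * ‖rotheAvgInterp T N g t - g t‖ ^ 2 + 3 * ‖g t - f t‖ ^ 2 := by
    intro t ht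
    rw [hlin t ht]
    have htri := norm_add₃_le (a := rotheAvgInterp T N (fun s => f s - g s) t)
      (b := rotheAvgInterp T N g t - g t) (c := g t - f t)
    have hsq := pow_le_pow_left₀ (norm_nonneg _) htri 2
    nlinarith [sq_nonneg (‖rotheAvgInterp T N (fun s => f s - g s) t‖ - ‖rotheAvgInterp T N g t - g t‖),
      sq_nonneg (‖rotheAvgInterp T N (fun s => f s - g s) t‖ - ‖g t - f t‖),
      sq_nonneg (‖rotheAvgInterp T N g t - g t‖ - ‖g t - f t‖)]
  have aint : Integrable (fun t => ‖rotheAvgInterp T N (fun s => f s - g s) t‖ ^ 2)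
      (volume.restrict (Ioc (0 : ℝ) T)) := sq_integrable (interp_memLp T hT N _)
  have bint : Integrable (fun t => ‖rotheAvgInterp T N g t - g t‖ ^ 2)
      (volume.restrict (Ioc (0 : ℝ) T)) := sq_integrable ((interp_memLp T hT N g).sub hgmem')
  have cint : Integrable (fun t => ‖g t - f t‖ ^ 2)
      (volume.restrict (Ioc (0 : ℝ) T)) := sq_integrable (hgmem'.sub hf)
  have hmono : ∫ t in Ioc (0 : ℝ) T, ‖rotheAvgInterp T N f t - f t‖ ^ 2
      ≤ ∫ t in Ioc (0 : ℝ) T, (3 * ‖rotheAvgInterp T N (fun s => f s - g s) t‖ ^ 2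
        + 3 * ‖rotheAvgInterp T N g t - g t‖ ^ 2 + 3 * ‖g t - f t‖ ^ 2) := by
    apply integral_mono_of_nonneg (Eventually.of_forall fun t => sq_nonneg _)
      (((aint.const_mul 3).add (bint.const_mul 3)).add (cint.const_mul 3))
    filter_upwards [ae_restrict_mem measurableSet_Ioc] with t ht
    exact hptsq t ht
  have hsplit : ∫ t in Ioc (0 : ℝ) T, (3 * ‖rotheAvgInterp T N (fun s => f s - g s) t‖ ^ 2
        + 3 * ‖rotheAvgInterp T N g t - g t‖ ^ 2 + 3 * ‖g t - f t‖ ^ 2)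
      = 3 * (∫ t in Ioc (0 : ℝ) T, ‖rotheAvgInterp T N (fun s => f s - g s) t‖ ^ 2)
        + 3 * (∫ t in Ioc (0 : ℝ) T, ‖rotheAvgInterp T N g t - g t‖ ^ 2)
        + 3 * (∫ t in Ioc (0 : ℝ) T, ‖g t - f t‖ ^ 2) := by
    have e1 := integral_add (μ := volume.restrict (Ioc (0 : ℝ) T))
      ((aint.const_mul 3).add (bint.const_mul 3)) (cint.const_mul 3)
    have e2 := integral_add (μ := volume.restrict (Ioc (0 : ℝ) T))
      (aint.const_mul 3) (bint.const_mul 3)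
    simp only [Pi.add_apply] at e1 e2
    rw [e1, e2, integral_const_mul, integral_const_mul, integral_const_mul]
  have ha : ∫ t in Ioc (0 : ℝ) T, ‖rotheAvgInterp T N (fun s => f s - g s) t‖ ^ 2
      ≤ 5 * ∫ t in Ioc (0 : ℝ) T, ‖f t - g t‖ ^ 2 := by
    have := interp_bound hT hN1 hfgmem
    exact this
  have hc' : ∫ t in Ioc (0 : ℝ) T, ‖g t - f t‖ ^ 2
      = ∫ t in Ioc (0 : ℝ) T, ‖f t - g t‖ ^ 2 := by
    congr 1
    ext t
    rw [norm_sub_rev]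
  have hnn : 0 ≤ ∫ t in Ioc (0 : ℝ) T, ‖rotheAvgInterp T N f t - f t‖ ^ 2 :=
    integral_nonneg fun t => sq_nonneg _
  rw [Real.norm_eq_abs, abs_of_nonneg hnn]
  calc ∫ t in Ioc (0 : ℝ) T, ‖rotheAvgInterp T N f t - f t‖ ^ 2
      ≤ 3 * (∫ t in Ioc (0 : ℝ) T, ‖rotheAvgInterp T N (fun s => f s - g s) t‖ ^ 2)
        + 3 * (∫ t in Ioc (0 : ℝ) T, ‖rotheAvgInterp T N g t - g t‖ ^ 2)
        + 3 * (∫ t in Ioc (0 : ℝ) T, ‖g t - f t‖ ^ 2) := by rw [← hsplit]; exact hmono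
    _ ≤ 3 * (5 * (ε / 72)) + 3 * (ε / 12) + 3 * (ε / 72) := by
        rw [hc']
        linarith [ha, hD, hNg]
    _ < ε := by linarith
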